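/- Let β = log₂(3/2) and let C ⊆ {0,1}^n be a subcube of codimension 1 or 2 (n ≥ 2). Then ∫ h_C^β dμ = 2 μ(C)(1 − μ(C)), i.e., the isoperimetric inequality ∫ h_A^β dμ ≥ 2μ(A)(1−μ(A)) holds with equality for subcubes of codimension 1 and 2. -/
import Mathlib

open Finset

noncomputable def β : ℝ := Real.logb 2 (3/2)

def flipC {n : ℕ} (x : Fin n → Bool) (i : Fin n) : Fin n → Bool :=
  Function.update x i (!x i)

def hbd {n : ℕ} (A : Finset (Fin n → Bool)) (x : Fin n → Bool) : ℕ :=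
  if x ∈ A then (univ.filter (fun i => flipC x i ∉ A)).card else 0

/-- `C` is a subcube of codimension `k`: some `k` coordinates are fixed. -/
def IsSubcube {n : ℕ} (k : ℕ) (C : Finset (Fin n → Bool)) : Prop :=
  ∃ (I : Finset (Fin n)) (z : Fin n → Bool), I.card = k ∧
    C = univ.filter (fun x => ∀ i ∈ I, x i = z i)

lemma card_subcube {n : ℕ} (I : Finset (Fin n)) (z : Fin n → Bool) :
    (univ.filter (fun x : Fin n → Bool => ∀ i ∈ I, x i = z i)).card
      = 2 ^ (n - I.card) := by
  have h : univ.filter (fun x : Fin n → Bool => ∀ i ∈ I, x i = z i)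
      = Fintype.piFinset (fun i => if i ∈ I then {z i} else Finset.univ) := by
    ext x
    simp only [mem_filter, mem_univ, true_and, Fintype.mem_piFinset]
    constructor
    · intro hx i
      by_cases hi : i ∈ I <;> simp [hi, hx i]
    · intro hx i hi
      have := hx i
      simpa [hi] using this
  rw [h, Fintype.card_piFinset]
  have : ∀ i : Fin n, (if i ∈ I then ({z i} : Finset Bool) else Finset.univ).card
      = if i ∈ I then 1 else 2 := by
    intro i; split <;> simp
  simp only [this]
  rw [Finset.prod_ite, Finset.prod_const_one, one_mul, Finset.prod_const]
  congr 1
  have h2 : Finset.filter (fun x => x ∉ I) Finset.univ = Iᶜ := by ext; simp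
  rw [h2, Finset.card_compl, Fintype.card_fin]

theorem iso_eq_subcube {n : ℕ} (hn : 2 ≤ n) (k : ℕ) (hk : k = 1 ∨ k = 2)
    (C : Finset (Fin n → Bool)) (hC : IsSubcube k C) :
    (∑ x, (hbd C x : ℝ) ^ β) / 2 ^ n =
      2 * ((C.card : ℝ) / 2 ^ n) * (1 - (C.card : ℝ) / 2 ^ n) := by
  obtain ⟨I, z, hIk, hCdef⟩ := hC
  have hβpos : 0 < β := Real.logb_pos one_lt_two (by norm_num)
  have hcard : C.card = 2 ^ (n - k) := by rw [hCdef, card_subcube, hIk]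
  have hmem : ∀ x, x ∈ C ↔ ∀ i ∈ I, x i = z i := by
    intro x; rw [hCdef]; simp
  have hfilter : ∀ x ∈ C, (univ.filter (fun i => flipC x i ∉ C)) = I := by
    intro x hx
    have hx' := (hmem x).1 hx
    ext i
    simp only [mem_filter, mem_univ, true_and]
    constructor
    · intro hflip
      by_contra hi
      apply hflip
      rw [hmem]
      intro j hj
      rw [flipC, Function.update_of_ne (by rintro rfl; exact hi hj)]
      exact hx' j hj
    · intro hi hflip
      have := (hmem _).1 hflip i hi
      rw [flipC, Function.update_self, hx' i hi] at this
      simp at this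
  have hsum : ∀ x, (hbd C x : ℝ) ^ β = if x ∈ C then (k : ℝ) ^ β else 0 := by
    intro x
    unfold hbd
    by_cases hx : x ∈ C
    · rw [if_pos hx, if_pos hx, hfilter x hx, hIk]
    · rw [if_neg hx, if_neg hx]
      simpa using Real.zero_rpow (ne_of_gt hβpos)
  simp only [hsum]
  rw [Finset.sum_ite_mem, Finset.univ_inter, Finset.sum_const, nsmul_eq_mul, hcard]
  have hkn : k ≤ n := by omega
  have hpow : (2 : ℝ) ^ n = 2 ^ (n - k) * 2 ^ k := by
    rw [← pow_add]; congr 1; omega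
  have ha : (0 : ℝ) < 2 ^ (n - k) := by positivity
  push_cast
  rcases hk with rfl | rfl
  · rw [Nat.cast_one, Real.one_rpow, hpow]
    field_simp
    ring
  · have h2 : ((2 : ℕ) : ℝ) ^ β = 3 / 2 := by
      rw [Nat.cast_ofNat]
      exact Real.rpow_logb two_pos (by norm_num) (by norm_num)
    rw [h2, hpow]
    field_simp
    ring
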